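/- Let X be a zero-dimensional metric space which is not locally compact and whose derived set X' is not compact. Then X contains a closed subspace homeomorphic to L = M ⊔ (ℕ × s), the topological sum of the countably infinite metric fan M = (ω × ℕ) ∪ {∞} and countably many copies of the convergent sequence s = {0} ∪ {1/n : n ∈ ℕ}. -/

import Mathlib

open Topology Set

/-- The countably infinite metric fan `M = (ω × ℕ) ∪ {∞}`: `none` is the point `∞`,
`some (α, n)` is the point `(α, n)` of `ω × {n}`. -/
def FanM : Type := Option (ℕ × ℕ)

/-- The fan topology on `M`: points of `ω × ℕ` are isolated and the basic neighborhoods of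
`∞` are `U(N) = {(α, n) : n ≥ N} ∪ {∞}`. -/
instance : TopologicalSpace FanM where
  IsOpen S := (none ∈ S) → ∃ N : ℕ, ∀ α n : ℕ, N ≤ n → (Option.some (α, n) : FanM) ∈ S
  isOpen_univ := fun _ => ⟨0, fun _ _ _ => trivial⟩
  isOpen_inter := by
    intro s t hs ht hmem
    obtain ⟨Ns, hNs⟩ := hs hmem.1
    obtain ⟨Nt, hNt⟩ := ht hmem.2
    exact ⟨max Ns Nt, fun α n hn =>
      ⟨hNs α n (le_trans (le_max_left _ _) hn), hNt α n (le_trans (le_max_right _ _) hn)⟩⟩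
  isOpen_sUnion := by
    intro S hS hmem
    obtain ⟨t, htS, hnt⟩ := hmem
    obtain ⟨N, hN⟩ := hS t htS hnt
    exact ⟨N, fun α n hn => ⟨t, htS, hN α n hn⟩⟩

/-- The convergent sequence `s = {0} ∪ {1/n : n ∈ ℕ, n ≥ 1} ⊆ ℝ`. -/
def sSet : Set ℝ := {x | x = 0 ∨ ∃ n : ℕ, 0 < n ∧ x = 1 / (n : ℝ)}

/-- The space `L = M ⊔ (ℕ × s)`: the topological sum of the metric fan and countably many
copies of the convergent sequence. -/
def Lspace : Type := FanM ⊕ (ℕ × ↥sSet)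

instance : TopologicalSpace Lspace := instTopologicalSpaceSum

/-- The point `∞ ∈ M ⊆ L`. -/
def infPt : Lspace := Sum.inl none

/-- The point `a_{p,q} = (p, p+q) ∈ M ⊆ L`. -/
def aPt (p q : ℕ) : Lspace := Sum.inl (Option.some (p, p + q))

lemma one_div_mem_sSet (m : ℕ) : (1 / (m : ℝ)) ∈ sSet := by
  rcases Nat.eq_zero_or_pos m with h | h
  · exact Or.inl (by simp [h])
  · exact Or.inr ⟨m, h, rfl⟩

/-- The point `b_{p,q} = (p, 1/(p+q)) ∈ ℕ × s ⊆ L`. -/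
noncomputable def bPt (p q : ℕ) : Lspace :=
  Sum.inr (p, ⟨1 / ((p + q : ℕ) : ℝ), one_div_mem_sSet _⟩)

/-- The point `c_p = (p, 0) ∈ ℕ × s ⊆ L`. -/
def cPt (p : ℕ) : Lspace := Sum.inr (p, ⟨0, Or.inl rfl⟩)

/-- The set `A = {f_{p,q} : p, q ∈ ℕ, p, q ≥ 1} ⊆ C(L, 2)`, where `f_{p,q}` is the continuous
function with value `1` exactly at the two points `a_{p,q}` and `b_{p,q}`. -/
def setA : Set C(Lspace, ZMod 2) :=
  {f | ∃ p q : ℕ, 0 < p ∧ 0 < q ∧ ∀ x : Lspace, f x = 1 ↔ (x = aPt p q ∨ x = bPt p q)}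

section MyAux
open Filter
set_option linter.unusedSectionVars false
variable {X : Type*} [MetricSpace X]


/-- A set with no accumulation points anywhere in the space. -/
def NoAcc (D : Set X) : Prop := ∀ y : X, ¬ AccPt y (𝓟 D)

lemma NoAcc.mono {D D' : Set X} (h : NoAcc D) (hsub : D' ⊆ D) : NoAcc D' :=
  fun y hy => h y (hy.mono (principal_mono.2 hsub))

lemma NoAcc.isClosed {D : Set X} (h : NoAcc D) : IsClosed D := by
  rw [← isOpen_compl_iff, Metric.isOpen_iff]
  intro y hy
  have := h y
  rw [accPt_iff_nhds] at this
  push_neg at this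
  obtain ⟨U, hU, hUy⟩ := this
  obtain ⟨ε, hε, hball⟩ := Metric.mem_nhds_iff.1 hU
  refine ⟨ε, hε, fun q hq hqD => hy ?_⟩
  have := hUy q ⟨hball hq, hqD⟩
  rwa [← this]

lemma NoAcc.ball {D : Set X} {y : X} (h : ¬ AccPt y (𝓟 D)) :
    ∃ ε > 0, ∀ q ∈ D, dist q y < ε → q = y := by
  rw [accPt_iff_nhds] at h
  push_neg at h
  obtain ⟨U, hU, hUy⟩ := h
  obtain ⟨ε, hε, hball⟩ := Metric.mem_nhds_iff.1 hU
  exact ⟨ε, hε, fun q hq hd => hUy q ⟨hball (Metric.mem_ball.2 hd), hq⟩⟩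

lemma NoAcc.union {A B : Set X} (hA : NoAcc A) (hB : NoAcc B) : NoAcc (A ∪ B) := by
  intro y hy
  rw [accPt_iff_nhds] at hy
  obtain ⟨εA, hεA, hA'⟩ := NoAcc.ball (hA y)
  obtain ⟨εB, hεB, hB'⟩ := NoAcc.ball (hB y)
  obtain ⟨q, ⟨hq1, hq2⟩, hq3⟩ := hy (Metric.ball y (min εA εB))
    (Metric.ball_mem_nhds y (lt_min hεA hεB))
  rcases hq2 with h | h
  · exact hq3 (hA' q h (lt_of_lt_of_le (Metric.mem_ball.1 hq1) (min_le_left _ _)))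
  · exact hq3 (hB' q h (lt_of_lt_of_le (Metric.mem_ball.1 hq1) (min_le_right _ _)))

lemma NoAcc.finite {D : Set X} (h : D.Finite) : NoAcc D := by
  intro y hy
  rw [accPt_principal_iff_clusterPt] at hy
  have hcl : y ∈ closure (D \ {y}) := mem_closure_iff_clusterPt.2 hy
  have : IsClosed (D \ {y}) := (h.subset diff_subset).isClosed
  rw [this.closure_eq] at hcl
  exact hcl.2 rfl

lemma NoAcc.biUnion_lt {D : ℕ → Set X} (hD : ∀ n, NoAcc (D n)) (N : ℕ) :
    NoAcc (⋃ n < N, D n) := by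
  induction N with
  | zero => simpa using NoAcc.finite (finite_empty)
  | succ N ih =>
    have : (⋃ n < N + 1, D n) = (⋃ n < N, D n) ∪ D N := by
      ext x
      simp only [mem_iUnion, mem_union, Nat.lt_succ_iff_lt_or_eq]
      constructor
      · rintro ⟨n, (h | rfl), hx⟩
        · exact Or.inl ⟨n, h, hx⟩
        · exact Or.inr hx
      · rintro (⟨n, h, hx⟩ | hx)
        · exact ⟨n, Or.inl h, hx⟩
        · exact ⟨N, Or.inr rfl, hx⟩
    rw [this]
    exact ih.union (hD N)







/-- From a closed non-compact set in a metric space, extract an infinite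
closed discrete subset (enumerated injectively). -/
lemma exists_discrete_embedding {C : Set X} (hC : IsClosed C) (hnc : ¬ IsCompact C) :
    ∃ f : ℕ → X, Function.Injective f ∧ (∀ k, f k ∈ C) ∧ NoAcc (Set.range f) := by
  classical
  have hseq : ¬ IsSeqCompact C := fun h => hnc h.isCompact
  rw [IsSeqCompact] at hseq
  push_neg at hseq
  obtain ⟨v, hvC, hv⟩ := hseq
  -- no subsequence of `v` converges to any point of `X`
  have hnoconv : ∀ x : X, ∀ φ : ℕ → ℕ, StrictMono φ → ¬ Tendsto (v ∘ φ) atTop (𝓝 x) := by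
    intro x φ hφ ht
    have hxC : x ∈ C := by
      have : x ∈ closure C := mem_closure_of_tendsto ht (Eventually.of_forall fun n => hvC _)
      rwa [hC.closure_eq] at this
    exact hv x hxC φ hφ ht
  -- hence `v` has no cluster points
  have hnocl : ∀ x : X, ¬ MapClusterPt x atTop v := by
    intro x hx
    obtain ⟨ψ, hψ, hψt⟩ := TopologicalSpace.FirstCountableTopology.tendsto_subseq hx
    exact hnoconv x ψ hψ hψt
  -- the range of `v` is infinite
  have hinf : (Set.range v).Infinite := by
    intro hfin
    have : ∃ c, {n | v n = c}.Infinite := by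
      by_contra hall
      push_neg at hall
      change ∀ c, {n | v n = c}.Finite at hall
      have : (Set.univ : Set ℕ) ⊆ ⋃ c ∈ range v, {n | v n = c} := by
        intro n _
        exact Set.mem_biUnion (Set.mem_range_self n) rfl
      have hfin2 : (Set.univ : Set ℕ).Finite :=
        Set.Finite.subset (hfin.biUnion fun c _ => hall c) this
      exact Set.infinite_univ hfin2
    obtain ⟨c, hc⟩ := this
    have hfreq : ∃ᶠ n in atTop, v n = c := Nat.frequently_atTop_iff_infinite.2 hc
    obtain ⟨φ, hφ, hφv⟩ := Filter.extraction_of_frequently_atTop hfreq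
    have : Tendsto (v ∘ φ) atTop (𝓝 c) := by
      have : (v ∘ φ) = fun _ => c := funext fun n => hφv n
      rw [this]; exact tendsto_const_nhds
    exact hnoconv c φ hφ this
  -- the range of `v` has no accumulation points
  have hnoacc : NoAcc (Set.range v) := by
    intro x hx
    apply hnocl x
    rw [mapClusterPt_iff_frequently]
    intro s hs
    rw [Filter.frequently_atTop]
    intro N
    -- there are infinitely many distinct values of `v` in every neighborhood of `x`
    -- (since x is an accumulation point); pick one not among `v 0, ..., v (N-1)`.
    have key : ∀ (F : Finset X), ∃ y ∈ s ∩ range v, y ≠ x ∧ y ∉ F := by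
      intro F
      by_contra hcon
      push_neg at hcon
      have : AccPt x (𝓟 ((s ∩ range v) ∩ F)) := by
        rw [accPt_iff_nhds] at hx ⊢
        intro U hU
        obtain ⟨y, ⟨hy1, hy2⟩, hy3⟩ := hx (U ∩ s) (Filter.inter_mem hU hs)
        exact ⟨y, ⟨hy1.1, ⟨hy1.2, hy2⟩, hcon y ⟨hy1.2, hy2⟩ hy3⟩, hy3⟩
      have hfin : (((s ∩ range v) ∩ (F : Set X))).Finite :=
        (F.finite_toSet).subset inter_subset_right
      have : ∀ y : X, ¬ AccPt y (𝓟 ((s ∩ range v) ∩ F)) := by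
        intro y hy
        rw [accPt_principal_iff_clusterPt] at hy
        have hcl := mem_closure_iff_clusterPt.2 hy
        rw [((hfin.subset diff_subset).isClosed).closure_eq] at hcl
        exact hcl.2 rfl
      exact this x ‹_›
    obtain ⟨y, ⟨hys, hyr⟩, _, hyF⟩ := key ((Finset.range N).image v)
    obtain ⟨n, rfl⟩ := hyr
    refine ⟨n, ?_, hys⟩
    by_contra hn
    push_neg at hn
    exact hyF (Finset.mem_image.2 ⟨n, Finset.mem_range.2 hn, rfl⟩)
  -- now extract an injective enumeration from the infinite countable range
  let emb := hinf.natEmbedding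
  refine ⟨fun k => (emb k : X), fun a b hab => emb.injective (Subtype.ext hab), ?_, ?_⟩
  · intro k
    obtain ⟨n, hn⟩ := (emb k).2
    show ((emb k : X)) ∈ C
    rw [← hn]; exact hvC n
  · intro y hy
    refine hnoacc y (hy.mono (principal_mono.2 ?_))
    rintro x ⟨k, rfl⟩
    exact (emb k).2


/-- From a non-isolated point, an injective sequence approaching it fast. -/
lemma exists_approach_seq {z : X} (h : (𝓝[≠] z).NeBot) {δ : ℝ} (hδ : 0 < δ) :
    ∃ u : ℕ → X, (∀ m, u m ≠ z) ∧ (∀ m, dist (u m) z < δ / 2 ^ m) ∧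
      (∀ m, dist (u (m + 1)) z < dist (u m) z) := by
  have key : ∀ ε : ℝ, 0 < ε → ∃ y : X, y ≠ z ∧ dist y z < ε := by
    intro ε hε
    have hmem : (Metric.ball z ε \ {z}) ∈ 𝓝[≠] z := by
      rw [diff_eq]
      exact Filter.inter_mem (nhdsWithin_le_nhds (Metric.ball_mem_nhds z hε))
        self_mem_nhdsWithin
    obtain ⟨y, hy⟩ := h.nonempty_of_mem hmem
    exact ⟨y, hy.2, Metric.mem_ball.1 hy.1⟩
  -- recursive construction
  have step : ∀ (m : ℕ) (prev : X), prev ≠ z →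
      ∃ y : X, y ≠ z ∧ dist y z < δ / 2 ^ (m + 1) ∧ dist y z < dist prev z := by
    intro m prev hprev
    have h1 : 0 < δ / 2 ^ (m + 1) := by positivity
    have h2 : 0 < dist prev z := dist_pos.2 hprev
    obtain ⟨y, hy1, hy2⟩ := key _ (lt_min h1 h2)
    exact ⟨y, hy1, lt_of_lt_of_le hy2 (min_le_left _ _), lt_of_lt_of_le hy2 (min_le_right _ _)⟩
  obtain ⟨y0, hy01, hy02⟩ := key δ hδ
  choose! F hF1 hF2 hF3 using step
  let u : ℕ → X := fun m => Nat.rec y0 (fun m prev => F m prev) m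
  have hne : ∀ m, u m ≠ z := by
    intro m
    induction m with
    | zero => exact hy01
    | succ m ih => exact hF1 m (u m) ih
  refine ⟨u, hne, ?_, fun m => hF3 m (u m) (hne m)⟩
  intro m
  induction m with
  | zero => show dist y0 z < δ / 2 ^ 0; simpa using hy02
  | succ m ih => exact hF2 m (u m) (hne m)

/-- Diagonal selection: from countably many injective sequences, an injective
doubly-indexed selection with `g (α, n)` in the range of the `n`-th sequence. -/
lemma exists_fan_selection (d : ℕ → ℕ → X) (hd : ∀ n, Function.Injective (d n)) :
    ∃ g : ℕ × ℕ → X, Function.Injective g ∧ ∀ α n, g (α, n) ∈ Set.range (d n) := by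
  classical
  have fresh : ∀ (n : ℕ) (L : List X), ∃ k, d n k ∉ L := by
    intro n L
    by_contra hcon
    push_neg at hcon
    have : Set.range (d n) ⊆ ↑L.toFinset := by
      rintro x ⟨k, rfl⟩
      simpa using hcon k
    exact (Set.infinite_range_of_injective (hd n)) (Set.Finite.subset (L.toFinset.finite_toSet) this)
  let π : ℕ ≃ ℕ × ℕ := (Denumerable.eqv (ℕ × ℕ)).symm
  let step : ℕ → List X → X := fun n L => d n (Nat.find (fresh n L))
  have hstep : ∀ n L, step n L ∈ Set.range (d n) ∧ step n L ∉ L :=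
    fun n L => ⟨⟨_, rfl⟩, Nat.find_spec (fresh n L)⟩
  let G : ℕ → List X := fun i => Nat.rec [] (fun j L => L ++ [step (π j).2 L]) i
  let g0 : ℕ → X := fun i => step (π i).2 (G i)
  have hGsucc : ∀ i, G (i + 1) = G i ++ [g0 i] := fun i => rfl
  have hGmono : ∀ i j, i ≤ j → ∀ x ∈ G i, x ∈ G j := by
    intro i j hij
    induction j with
    | zero =>
      intro x hx
      have : i = 0 := Nat.le_zero.1 hij
      rw [← this]; exact hx
    | succ j ih =>
      intro x hx
      rcases Nat.lt_or_ge i (j+1) with hlt | hge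
      · have : x ∈ G j := by
          rcases Nat.lt_or_ge i j with h2 | h2
          · exact ih (Nat.le_of_lt h2) x hx
          · have : i = j := by omega
            rw [← this]; exact hx
        rw [hGsucc]; exact List.mem_append_left _ this
      · have : i = j + 1 := by omega
        rw [← this]; exact hx
  have hg0 : ∀ i, g0 i ∉ G i := fun i => (hstep (π i).2 (G i)).2
  have hg0mem : ∀ i, g0 i ∈ G (i + 1) := by
    intro i; rw [hGsucc]; exact List.mem_append_right _ (List.mem_singleton.2 rfl)
  have hg0inj : Function.Injective g0 := by
    intro i j hij
    by_contra hne
    rcases Nat.lt_or_ge i j with h | h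
    · exact hg0 j (hij ▸ hGmono (i+1) j h (g0 i) (hg0mem i))
    · have h' : j < i := by omega
      exact hg0 i (hij ▸ hGmono (j+1) i h' (g0 j) (hg0mem j))
  refine ⟨fun p => g0 (π.symm p), fun a b hab => ?_, fun α n => ?_⟩
  · have := hg0inj hab
    exact π.symm.injective this
  · have hsimp : π (π.symm (α, n)) = (α, n) := Equiv.apply_symm_apply _ _
    show step (π (π.symm (α, n))).2 (G (π.symm (α, n))) ∈ Set.range (d n)
    rw [hsimp]
    exact (hstep n (G (π.symm (α, n)))).1

end MyAux

set_option maxHeartbeats 2000000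

/-- A zero-dimensional metric space `X` that is not locally compact and whose
derived set (the set of non-isolated points) is not compact contains a closed subspace
homeomorphic to `L = M ⊔ (ℕ × s)`, the sum of the metric fan and countably many convergent
sequences. -/
theorem statement19 {X : Type*} [MetricSpace X]
    (hzd : TopologicalSpace.IsTopologicalBasis {s : Set X | IsClopen s})
    (hnlc : ¬ LocallyCompactSpace X)
    (hd : ¬ IsCompact {x : X | (𝓝[≠] x).NeBot}) :
    ∃ e : Lspace → X, Topology.IsClosedEmbedding e := by
  classical
  -- the derived set is closed
  have hXDclosed : IsClosed {x : X | (𝓝[≠] x).NeBot} := by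
    rw [← isOpen_compl_iff, Metric.isOpen_iff]
    intro x hx
    have hbot : 𝓝[≠] x = ⊥ := by
      by_contra h
      exact hx ⟨h⟩
    have hsing : {x} ∈ 𝓝 x := by
      have h0 : (∅ : Set X) ∈ 𝓝[≠] x := by rw [hbot]; exact Filter.mem_bot
      rw [mem_nhdsWithin] at h0
      obtain ⟨u, hu, hxu, husub⟩ := h0
      have : u ⊆ {x} := by
        intro y hy
        by_contra hyx
        exact husub ⟨hy, hyx⟩
      exact Filter.mem_of_superset (hu.mem_nhds hxu) this
    obtain ⟨ε, hε, hball⟩ := Metric.mem_nhds_iff.1 hsing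
    refine ⟨ε, hε, fun y hy => ?_⟩
    have : y = x := hball hy
    rw [this]; exact hx
  -- a point with no compact neighborhood
  obtain ⟨x₀, hx₀⟩ : ∃ x₀ : X, ∀ K : Set X, K ∈ 𝓝 x₀ → ¬ IsCompact K := by
    by_contra hcon
    push_neg at hcon
    have : WeaklyLocallyCompactSpace X :=
      ⟨fun x => by obtain ⟨K, hK1, hK2⟩ := hcon x; exact ⟨K, hK2, hK1⟩⟩
    exact hnlc WeaklyLocallyCompactSpace.locallyCompactSpace
  -- discrete set of non-isolated points, avoiding x₀
  obtain ⟨zf, hzfinj, hzfXD, hzfNoAcc⟩ := exists_discrete_embedding hXDclosed hd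
  set E' : Set X := Set.range zf \ {x₀} with hE'def
  have hE'inf : E'.Infinite :=
    (Set.infinite_range_of_injective hzfinj).diff (finite_singleton x₀)
  have hE'NoAcc : NoAcc E' := hzfNoAcc.mono diff_subset
  have hE'closed : IsClosed E' := hE'NoAcc.isClosed
  -- clopen neighborhood of x₀ avoiding E'
  obtain ⟨U, hUclopen, hx₀U, hUsub⟩ :=
    hzd.exists_subset_of_mem_open (show x₀ ∈ (E')ᶜ from fun h => h.2 rfl)
      hE'closed.isOpen_compl
  -- the points z p
  let zemb := hE'inf.natEmbedding
  set z : ℕ → X := fun p => (zemb p : X) with hzdef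
  have hzinj : Function.Injective z :=
    fun a b hab => zemb.injective (Subtype.ext hab)
  have hzE' : ∀ p, z p ∈ E' := fun p => (zemb p).2
  have hzNoAcc : NoAcc (Set.range z) := by
    refine hE'NoAcc.mono ?_
    rintro _ ⟨p, rfl⟩
    exact hzE' p
  have hzXD : ∀ p, (𝓝[≠] (z p)).NeBot := by
    intro p
    obtain ⟨k, hk⟩ := (hzE' p).1
    rw [← hk]; exact hzfXD k
  have hzU : ∀ p, z p ∉ U := fun p h => (hUsub h) (hzE' p)
  -- the separating radii r p
  have hrex : ∀ p, ∃ r, 0 < r ∧ (∀ q, dist (z q) (z p) < r → q = p) ∧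
      Metric.ball (z p) r ⊆ Uᶜ := by
    intro p
    obtain ⟨r1, hr1, hball1⟩ := Metric.isOpen_iff.1 hUclopen.1.isOpen_compl (z p) (hzU p)
    obtain ⟨ε, hε, hqe⟩ := NoAcc.ball (hzNoAcc (z p))
    refine ⟨min r1 ε, lt_min hr1 hε, fun q hq => ?_, fun t ht =>
      hball1 (Metric.mem_ball.2 (lt_of_lt_of_le (Metric.mem_ball.1 ht) (min_le_left _ _)))⟩
    exact hzinj (hqe (z q) ⟨q, rfl⟩ (lt_of_lt_of_le hq (min_le_right _ _)))
  choose r hr0 hrsep hrU using hrex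
  -- the radii δ p
  set δ : ℕ → ℝ := fun p => min (r p / 3) (1 / ((p : ℝ) + 1)) with hδdef
  have hδ0 : ∀ p, 0 < δ p := fun p => lt_min (div_pos (hr0 p) (by norm_num)) (by positivity)
  have hδr : ∀ p, δ p ≤ r p / 3 := fun p => min_le_left _ _
  have hδp : ∀ p, δ p ≤ 1 / ((p : ℝ) + 1) := fun p => min_le_right _ _
  have h2δr : ∀ p, 2 * δ p ≤ r p := by
    intro p
    have := hδr p
    have := hr0 p
    linarith
  -- the approach sequences u p
  choose u hu1 hu2 hu3 using fun p => exists_approach_seq (hzXD p) (hδ0 p)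
  have huδ : ∀ p m, dist (u p m) (z p) < δ p := by
    intro p m
    refine lt_of_lt_of_le (hu2 p m) (div_le_self (hδ0 p).le ?_)
    exact one_le_pow₀ (by norm_num : (1:ℝ) ≤ 2)
  have huanti : ∀ p, StrictAnti (fun m => dist (u p m) (z p)) :=
    fun p => strictAnti_nat_of_succ_lt (hu3 p)
  have huinj : ∀ p, Function.Injective (u p) := by
    intro p a b hab
    by_contra hne
    rcases Nat.lt_or_ge a b with h | h
    · exact absurd (congrArg (fun t => dist t (z p)) hab) (ne_of_gt (huanti p h))
    · have h' : b < a := by omega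
      exact absurd (congrArg (fun t => dist t (z p)) hab) (ne_of_lt (huanti p h'))
  have hu0 : ∀ p m, 0 < dist (u p m) (z p) := fun p m => dist_pos.2 (hu1 p m)
  have huU : ∀ p m, u p m ∉ U := by
    intro p m hmem
    refine hrU p ?_ hmem
    refine Metric.mem_ball.2 (lt_of_lt_of_le (lt_of_lt_of_le (huδ p m) (hδr p)) ?_)
    have := hr0 p; linarith
  -- separation of the convergent-sequence clusters
  have hsep : ∀ p q (a b : X), dist a (z p) < 2 * δ p → dist b (z q) ≤ δ q → a = b → p = q := by
    intro p q a b ha hb hab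
    subst hab
    have hzz : dist (z q) (z p) < 2 * δ p + δ q :=
      lt_of_le_of_lt (dist_triangle (z q) a (z p)) (by rw [dist_comm (z q) a]; linarith)
    rcases le_total (r q) (r p) with hle | hle
    · refine (hrsep p q ?_).symm
      have h1 := hδr p; have h2 := hδr q; have := hr0 q
      calc dist (z q) (z p) < 2 * δ p + δ q := hzz
        _ ≤ r p := by linarith
    · refine hrsep q p ?_
      rw [dist_comm]
      have h1 := hδr p; have h2 := hδr q; have := hr0 q; have := hr0 p
      calc dist (z q) (z p) < 2 * δ p + δ q := hzz
        _ ≤ r q := by linarith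
  -- the fan spines
  have hCn : ∀ n : ℕ, IsClosed (Metric.closedBall x₀ (1 / ((n : ℝ) + 1)) ∩ U) ∧
      ¬ IsCompact (Metric.closedBall x₀ (1 / ((n : ℝ) + 1)) ∩ U) := by
    intro n
    constructor
    · exact Metric.isClosed_closedBall.inter hUclopen.1
    · refine hx₀ _ ?_
      refine Filter.mem_of_superset
        (Filter.inter_mem (Metric.ball_mem_nhds x₀ (by positivity : (0:ℝ) < 1 / ((n : ℝ) + 1)))
          (hUclopen.2.mem_nhds hx₀U)) ?_
      exact inter_subset_inter Metric.ball_subset_closedBall (subset_refl _)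
  have hdex : ∀ n : ℕ, ∃ d : ℕ → X, Function.Injective d ∧
      (∀ k, d k ∈ Metric.closedBall x₀ (1 / ((n : ℝ) + 1)) ∩ U) ∧ (∀ k, d k ≠ x₀) ∧
      NoAcc (Set.range d) := by
    intro n
    obtain ⟨d0, hd0inj, hd0mem, hd0acc⟩ := exists_discrete_embedding (hCn n).1 (hCn n).2
    have hinf : ((Set.range d0) \ {x₀}).Infinite :=
      (Set.infinite_range_of_injective hd0inj).diff (finite_singleton x₀)
    let em := hinf.natEmbedding
    refine ⟨fun k => (em k : X), fun a b hab => em.injective (Subtype.ext hab),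
      fun k => ?_, fun k => (em k).2.2, ?_⟩
    · obtain ⟨j, hj⟩ := (em k).2.1
      show ((em k : X)) ∈ _
      rw [← hj]; exact hd0mem j
    · refine hd0acc.mono ?_
      rintro _ ⟨k, rfl⟩
      exact (em k).2.1
  choose d hdinj hdmem hdne hdNoAcc using hdex
  obtain ⟨g, hginj, hgmem⟩ := exists_fan_selection d hdinj
  have hgball : ∀ α n, dist (g (α, n)) x₀ ≤ 1 / ((n : ℝ) + 1) := by
    intro α n
    obtain ⟨k, hk⟩ := hgmem α n
    rw [← hk]
    exact Metric.mem_closedBall.1 (hdmem n k).1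
  have hgU : ∀ α n, g (α, n) ∈ U := by
    intro α n
    obtain ⟨k, hk⟩ := hgmem α n
    rw [← hk]; exact (hdmem n k).2
  have hgx : ∀ α n, g (α, n) ≠ x₀ := by
    intro α n
    obtain ⟨k, hk⟩ := hgmem α n
    rw [← hk]; exact hdne n k
  -- the ambient sets
  set Sp : ℕ → Set X := fun n => Set.range (fun α => g (α, n)) with hSpdef
  have hSpNoAcc : ∀ n, NoAcc (Sp n) := by
    intro n
    refine (hdNoAcc n).mono ?_
    rintro _ ⟨α, rfl⟩
    exact hgmem α n
  set S : Set X := insert x₀ (⋃ n, Sp n) with hSdef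
  set sp : ℕ → Set X := fun p => insert (z p) (Set.range (fun m => u p (m + 1))) with hspdef
  set T' : Set X := ⋃ p, sp p with hT'def
  set T : Set X := S ∪ T' with hTdef
  have hsp_dist : ∀ p t, t ∈ sp p → dist t (z p) ≤ δ p := by
    rintro p t (rfl | ⟨m, rfl⟩)
    · simpa using (hδ0 p).le
    · exact (huδ p (m + 1)).le
  -- the embedding
  set e : Lspace → X := fun w => Sum.elim (fun o : FanM => Option.elim o x₀ g)
    (fun py : ℕ × ↥sSet => if ((py.2 : ℝ)) = 0 then z py.1 else u py.1 ⌊((py.2 : ℝ))⁻¹⌋₊) w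
    with hedef
  have he_inf : e infPt = x₀ := rfl
  have he_fan : ∀ an : ℕ × ℕ, e (Sum.inl (Option.some an)) = g an := fun _ => rfl
  have he_c : ∀ p (ys : ↥sSet), (ys : ℝ) = 0 → e (Sum.inr (p, ys)) = z p := by
    intro p ys h
    simp only [hedef, Sum.elim_inr, if_pos h]
  have he_s : ∀ p (ys : ↥sSet), (ys : ℝ) ≠ 0 → e (Sum.inr (p, ys)) = u p ⌊((ys : ℝ))⁻¹⌋₊ := by
    intro p ys h
    simp only [hedef, Sum.elim_inr, if_neg h]
  have hsval : ∀ ys : ↥sSet, (ys : ℝ) ≠ 0 →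
      ∃ m : ℕ, 0 < m ∧ (ys : ℝ) = 1 / (m : ℝ) ∧ ⌊((ys : ℝ))⁻¹⌋₊ = m := by
    rintro ⟨x, hx⟩ hne
    rcases hx with rfl | ⟨m, hm, rfl⟩
    · exact absurd rfl hne
    · refine ⟨m, hm, rfl, ?_⟩
      have h2 : ((1:ℝ)/(m:ℝ))⁻¹ = (m:ℝ) := by rw [one_div, inv_inv]
      show ⌊((1:ℝ)/(m:ℝ))⁻¹⌋₊ = m
      rw [h2, Nat.floor_natCast]
  have he_s' : ∀ (p : ℕ) (m : ℕ) (hm : 0 < m) (hy : ((1 : ℝ) / (m : ℝ)) ∈ sSet),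
      e (Sum.inr (p, ⟨1 / (m : ℝ), hy⟩)) = u p m := by
    intro p m hm hy
    have hne : ((1 : ℝ) / (m : ℝ)) ≠ 0 := by positivity
    rw [he_s p _ hne]
    congr 1
    show ⌊((1 : ℝ) / (m : ℝ))⁻¹⌋₊ = m
    have h2 : ((1:ℝ)/(m:ℝ))⁻¹ = (m:ℝ) := by rw [one_div, inv_inv]
    rw [h2, Nat.floor_natCast]
  -- membership of the range
  have he_mem : ∀ w, e w ∈ T := by
    intro w
    rcases w with o | ⟨p, ys⟩
    · rcases o with _ | an
      · exact Or.inl (mem_insert _ _)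
      · exact Or.inl (mem_insert_of_mem _ (mem_iUnion.2 ⟨an.2, ⟨an.1, rfl⟩⟩))
    · by_cases h0 : (ys : ℝ) = 0
      · rw [he_c p ys h0]
        exact Or.inr (mem_iUnion.2 ⟨p, mem_insert _ _⟩)
      · obtain ⟨m, hm, hval, hfl⟩ := hsval ys h0
        rw [he_s p ys h0, hfl]
        rcases m with _ | m0
        · exact absurd hm (lt_irrefl 0)
        · exact Or.inr (mem_iUnion.2 ⟨p, mem_insert_of_mem _ ⟨m0, rfl⟩⟩)
  have hTsub : ∀ t ∈ T, ∃ w, e w = t := by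
    rintro t (ht | ht)
    · rcases ht with rfl | ht
      · exact ⟨infPt, rfl⟩
      · obtain ⟨n, hn⟩ := mem_iUnion.1 ht
        obtain ⟨α, rfl⟩ := hn
        exact ⟨Sum.inl (Option.some (α, n)), rfl⟩
    · obtain ⟨p, hp⟩ := mem_iUnion.1 ht
      rcases hp with rfl | ⟨m, rfl⟩
      · exact ⟨Sum.inr (p, ⟨0, Or.inl rfl⟩), he_c p _ rfl⟩
      · exact ⟨Sum.inr (p, ⟨1 / ((m + 1 : ℕ) : ℝ), one_div_mem_sSet (m + 1)⟩),
          he_s' p (m + 1) (Nat.succ_pos m) _⟩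
  -- injectivity
  have hUside : ∀ o : FanM, e (Sum.inl o) ∈ U := by
    rintro (_ | an)
    · exact hx₀U
    · exact hgU an.1 an.2
  have hU'side : ∀ (p : ℕ) (ys : ↥sSet), e (Sum.inr (p, ys)) ∉ U := by
    intro p ys
    by_cases h0 : (ys : ℝ) = 0
    · rw [he_c p ys h0]; exact hzU p
    · rw [he_s p ys h0]; exact huU p _
  have hsb : ∀ (p : ℕ) (ys : ↥sSet), dist (e (Sum.inr (p, ys))) (z p) ≤ δ p := by
    intro p ys
    by_cases h0 : (ys : ℝ) = 0
    · rw [he_c p ys h0]; simpa using (hδ0 p).le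
    · rw [he_s p ys h0]; exact (huδ p _).le
  have heinj : Function.Injective e := by
    rintro (o | ⟨p, ys⟩) (o' | ⟨p', ys'⟩) h
    · rcases o with _ | an <;> rcases o' with _ | an'
      · rfl
      · exact absurd (show g (an'.1, an'.2) = x₀ from h.symm) (hgx an'.1 an'.2)
      · exact absurd (show g (an.1, an.2) = x₀ from h) (hgx an.1 an.2)
      · have : g an = g an' := ((he_fan an).symm.trans (h.trans (he_fan an')))
        rw [hginj this]
    · exact absurd h.symm (fun hh => (hU'side p' ys') (hh ▸ hUside o))
    · exact absurd h (fun hh => (hU'side p ys) (hh ▸ hUside o'))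
    · have hpp : p = p' := by
        refine hsep p p' (e (Sum.inr (p, ys))) (e (Sum.inr (p', ys'))) ?_ (hsb p' ys') h
        exact lt_of_le_of_lt (hsb p ys) (by have := hδ0 p; linarith)
      subst hpp
      by_cases h0 : (ys : ℝ) = 0 <;> by_cases h0' : (ys' : ℝ) = 0
      · have : ys = ys' := Subtype.ext (by rw [h0, h0'])
        rw [this]
      · obtain ⟨m', hm', hval', hfl'⟩ := hsval ys' h0'
        rw [he_c p ys h0, he_s p ys' h0'] at h
        exact absurd h.symm (hu1 p _)
      · obtain ⟨m, hm, hval, hfl⟩ := hsval ys h0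
        rw [he_c p ys' h0', he_s p ys h0] at h
        exact absurd h (hu1 p _)
      · obtain ⟨m, hm, hval, hfl⟩ := hsval ys h0
        obtain ⟨m', hm', hval', hfl'⟩ := hsval ys' h0'
        rw [he_s p ys h0, he_s p ys' h0', hfl, hfl'] at h
        have hmm : m = m' := huinj p h
        have hyy : ys = ys' := Subtype.ext (by rw [hval, hval', hmm])
        rw [hyy]
  -- closedness of the pieces
  have hmono : ∀ (N n : ℕ), N ≤ n → 1 / ((n:ℝ)+1) ≤ 1 / ((N:ℝ)+1) := by
    intro N n h
    apply one_div_le_one_div_of_le (by positivity)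
    have : (N:ℝ) ≤ n := Nat.cast_le.2 h
    linarith
  have hSclosed : IsClosed S := by
    rw [← isOpen_compl_iff, Metric.isOpen_iff]
    intro y hy
    have hyx : y ≠ x₀ := fun h => hy (h ▸ mem_insert _ _)
    have ha : 0 < dist y x₀ := dist_pos.2 hyx
    obtain ⟨N, hN⟩ := exists_nat_one_div_lt (show (0:ℝ) < dist y x₀ / 2 by linarith)
    have hK : NoAcc (insert x₀ (⋃ n, ⋃ _ : n < N, Sp n)) := by
      have h1 : NoAcc (⋃ n, ⋃ _ : n < N, Sp n) := by
        have := NoAcc.biUnion_lt hSpNoAcc N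
        convert this using 2
      have h2 : NoAcc ({x₀} : Set X) := NoAcc.finite (finite_singleton _)
      rw [insert_eq]
      exact h2.union h1
    have hyK : y ∉ insert x₀ (⋃ n, ⋃ _ : n < N, Sp n) := by
      rintro (rfl | hmem)
      · exact hyx rfl
      · obtain ⟨n, hn⟩ := mem_iUnion.1 hmem
        obtain ⟨hnN, hmem2⟩ := mem_iUnion.1 hn
        exact hy (mem_insert_of_mem _ (mem_iUnion.2 ⟨n, hmem2⟩))
    obtain ⟨ε2, hε2, hball2⟩ := Metric.isOpen_iff.1 hK.isClosed.isOpen_compl y hyK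
    refine ⟨min ε2 (dist y x₀ / 2), lt_min hε2 (by linarith), ?_⟩
    intro t ht
    have ht2 : dist t y < ε2 := lt_of_lt_of_le (Metric.mem_ball.1 ht) (min_le_left _ _)
    have ht3 : dist t y < dist y x₀ / 2 := lt_of_lt_of_le (Metric.mem_ball.1 ht) (min_le_right _ _)
    intro htS
    rcases htS with rfl | hsp
    · exact hball2 (Metric.mem_ball.2 ht2) (mem_insert _ _)
    · obtain ⟨n, hn⟩ := mem_iUnion.1 hsp
      obtain ⟨α, rfl⟩ := hn
      rcases Nat.lt_or_ge n N with hlt | hge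
      · exact hball2 (Metric.mem_ball.2 ht2)
          (mem_insert_of_mem _ (mem_iUnion.2 ⟨n, mem_iUnion.2 ⟨hlt, ⟨α, rfl⟩⟩⟩))
      · have h1 : dist (g (α, n)) x₀ ≤ 1 / ((N:ℝ)+1) := le_trans (hgball α n) (hmono N n hge)
        have h2 := dist_triangle y (g (α, n)) x₀
        rw [dist_comm y (g (α, n))] at h2
        linarith
  have hspcompact : ∀ p, IsCompact (sp p) := by
    intro p
    have htend : Filter.Tendsto (fun m => u p (m+1)) Filter.atTop (𝓝 (z p)) := by
      rw [tendsto_iff_dist_tendsto_zero]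
      refine squeeze_zero (fun m => dist_nonneg) (fun m => (hu2 p (m+1)).le) ?_
      have h2 : Filter.Tendsto (fun m : ℕ => (2:ℝ)^(m+1)) Filter.atTop Filter.atTop :=
        (tendsto_pow_atTop_atTop_of_one_lt one_lt_two).comp (Filter.tendsto_add_atTop_nat 1)
      exact Filter.Tendsto.div_atTop tendsto_const_nhds h2
    exact htend.isCompact_insert_range
  have hspclosed : ∀ p, IsClosed (sp p) := fun p => (hspcompact p).isClosed
  have hT'closed : IsClosed T' := by
    rw [← isOpen_compl_iff, Metric.isOpen_iff]
    intro y hy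
    have hyz : y ∉ Set.range z := by
      rintro ⟨p, rfl⟩
      exact hy (mem_iUnion.2 ⟨p, mem_insert _ _⟩)
    obtain ⟨ε1, hε1, hball1⟩ :=
      Metric.isOpen_iff.1 (hzNoAcc.isClosed).isOpen_compl y hyz
    obtain ⟨P, hP⟩ := exists_nat_one_div_lt (show (0:ℝ) < ε1/2 by linarith)
    have hBcl : IsClosed (⋃ p ∈ {q : ℕ | q < P}, sp p) :=
      (Set.finite_lt_nat P).isClosed_biUnion (fun p _ => hspclosed p)
    have hyB : y ∉ ⋃ p ∈ {q : ℕ | q < P}, sp p := by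
      intro hmem
      obtain ⟨p, hp⟩ := mem_iUnion.1 hmem
      obtain ⟨hpP, hmem2⟩ := mem_iUnion.1 hp
      exact hy (mem_iUnion.2 ⟨p, hmem2⟩)
    obtain ⟨ε2, hε2, hball2⟩ := Metric.isOpen_iff.1 hBcl.isOpen_compl y hyB
    refine ⟨min ε2 (ε1/2), lt_min hε2 (by linarith), ?_⟩
    intro t ht htT'
    have ht2 : dist t y < ε2 := lt_of_lt_of_le (Metric.mem_ball.1 ht) (min_le_left _ _)
    have ht3 : dist t y < ε1/2 := lt_of_lt_of_le (Metric.mem_ball.1 ht) (min_le_right _ _)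
    obtain ⟨p, hp⟩ := mem_iUnion.1 htT'
    rcases Nat.lt_or_ge p P with hlt | hge
    · exact hball2 (Metric.mem_ball.2 ht2)
        (mem_iUnion.2 ⟨p, mem_iUnion.2 ⟨hlt, hp⟩⟩)
    · have h1 : dist t (z p) ≤ 1 / ((P:ℝ)+1) :=
        le_trans (le_trans (hsp_dist p t hp) (hδp p)) (hmono P p hge)
      have h2 := dist_triangle (z p) t y
      rw [dist_comm (z p) t] at h2
      refine hball1 (Metric.mem_ball.2 ?_) ⟨p, rfl⟩
      linarith
  have hTclosed : IsClosed T := hSclosed.union hT'closed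
  -- isolation in sSet
  have harith : ∀ m k : ℕ, 0 < m → 0 < k → k ≠ m →
      1/((m:ℝ)*((m:ℝ)+1)) ≤ |1/(k:ℝ) - 1/(m:ℝ)| := by
    intro m k hm hk hne
    have hmR : (0:ℝ) < m := by exact_mod_cast hm
    have hkR : (0:ℝ) < k := by exact_mod_cast hk
    rcases Nat.lt_or_ge m k with hlt | hge
    · have h1 : (m:ℝ) + 1 ≤ k := by exact_mod_cast hlt
      have h2 : 1/(k:ℝ) ≤ 1/((m:ℝ)+1) := one_div_le_one_div_of_le (by linarith) h1
      have key : (1:ℝ)/m - 1/((m:ℝ)+1) = 1/((m:ℝ)*((m:ℝ)+1)) := by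
        field_simp
        ring
      have h3 : 1/(k:ℝ) - 1/(m:ℝ) ≤ 0 := by
        have := one_div_le_one_div_of_le hmR (by linarith : (m:ℝ) ≤ k)
        linarith
      rw [abs_of_nonpos h3]
      linarith
    · have hlt : k < m := by omega
      have h1 : (k:ℝ) + 1 ≤ m := by exact_mod_cast hlt
      have h3 : 0 ≤ 1/(k:ℝ) - 1/(m:ℝ) := by
        have := one_div_le_one_div_of_le hkR (by linarith : (k:ℝ) ≤ m)
        linarith
      rw [abs_of_nonneg h3]
      rw [div_sub_div _ _ (ne_of_gt hkR) (ne_of_gt hmR), one_mul, mul_one]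
      rw [div_le_div_iff₀ (by positivity) (by positivity)]
      have hkm : (k:ℝ) ≤ (m:ℝ) - 1 := by linarith
      have hd1 : (1:ℝ) ≤ (m:ℝ) - (k:ℝ) := by linarith
      have hA : (0:ℝ) ≤ ((m:ℝ)-(k:ℝ)-1) * ((m:ℝ)*((m:ℝ)+1)) :=
        mul_nonneg (by linarith) (by positivity)
      have hB : (0:ℝ) ≤ (m:ℝ)*((m:ℝ)-(k:ℝ)) := mul_nonneg hmR.le (by linarith)
      nlinarith [hA, hB, hmR]
  have hsiso : ∀ ys : ↥sSet, (ys : ℝ) ≠ 0 →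
      ∃ ε, 0 < ε ∧ ∀ s : ↥sSet, dist s ys < ε → s = ys := by
    intro ys h0
    obtain ⟨m, hm, hval, _⟩ := hsval ys h0
    have hmR : (0:ℝ) < m := by exact_mod_cast hm
    refine ⟨1 / ((m:ℝ) * ((m:ℝ)+1)), by positivity, ?_⟩
    rintro ⟨x, hx⟩ hdist
    rw [Subtype.dist_eq] at hdist
    rw [Real.dist_eq] at hdist
    simp only at hdist
    rw [hval] at hdist
    rcases hx with rfl | ⟨k, hk, rfl⟩
    · exfalso
      have h1 : |(0:ℝ) - 1/(m:ℝ)| = 1/(m:ℝ) := by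
        rw [zero_sub, abs_neg, abs_of_pos (by positivity)]
      rw [h1] at hdist
      have h2 : 1/((m:ℝ)*((m:ℝ)+1)) ≤ 1/(m:ℝ) :=
        one_div_le_one_div_of_le hmR (by nlinarith)
      linarith
    · by_cases hkm : k = m
      · subst hkm
        exact Subtype.ext (by rw [hval])
      · exact absurd hdist (not_lt.2 (harith m k hm hk hkm))
  -- continuity
  have hcont : Continuous e := by
    apply continuous_sum_dom.2
    constructor
    · rw [continuous_def]
      intro V hV
      show IsOpen ((e ∘ Sum.inl) ⁻¹' V)
      intro hmem
      obtain ⟨ρ, hρ, hball⟩ := Metric.isOpen_iff.1 hV x₀ hmem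
      obtain ⟨N, hN⟩ := exists_nat_one_div_lt hρ
      refine ⟨N, fun α n hn => ?_⟩
      show g (α, n) ∈ V
      exact hball (Metric.mem_ball.2 (lt_of_le_of_lt (le_trans (hgball α n) (hmono N n hn)) hN))
    · rw [continuous_def]
      intro V hV
      rw [isOpen_prod_iff]
      intro p ys hmem
      by_cases h0 : (ys : ℝ) = 0
      · have hzV : z p ∈ V := by
          have := hmem
          show z p ∈ V
          rw [← he_c p ys h0]
          exact hmem
        obtain ⟨ρ, hρ, hball⟩ := Metric.isOpen_iff.1 hV (z p) hzV
        obtain ⟨M, hM⟩ : ∃ M : ℕ, δ p / 2 ^ M < ρ := by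
          obtain ⟨M, hM0⟩ :=
            exists_pow_lt_of_lt_one (div_pos hρ (hδ0 p)) (by norm_num : (1/2 : ℝ) < 1)
          have h2M : (0:ℝ) < (2:ℝ)^M := by positivity
          have heq : (1/2:ℝ)^M = 1/2^M := by rw [div_pow, one_pow]
          rw [heq, div_lt_div_iff₀ h2M (hδ0 p)] at hM0
          refine ⟨M, ?_⟩
          rw [div_lt_iff₀ h2M]
          linarith
        refine ⟨{p}, Metric.ball ys (1/((M:ℝ)+1)), isOpen_discrete _, Metric.isOpen_ball,
          rfl, Metric.mem_ball_self (by positivity), ?_⟩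
        rintro ⟨q, s⟩ ⟨hq, hs⟩
        have hq' : q = p := hq
        subst hq'
        show e (Sum.inr (q, s)) ∈ V
        by_cases hs0 : (s : ℝ) = 0
        · rw [he_c _ s hs0]
          exact hzV
        · obtain ⟨m, hm, hval, hfl⟩ := hsval s hs0
          rw [he_s _ s hs0, hfl]
          have hdist := Metric.mem_ball.1 hs
          rw [Subtype.dist_eq, Real.dist_eq] at hdist
          simp only at hdist
          rw [hval, h0, sub_zero, abs_of_pos (by positivity : (0:ℝ) < 1/(m:ℝ))] at hdist
          have hMm : M ≤ m := by
            by_contra hcon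
            push_neg at hcon
            have h1 : (m:ℝ) ≤ (M:ℝ) := by exact_mod_cast hcon.le
            have hmR : (0:ℝ) < m := by exact_mod_cast hm
            have h2 : 1/((M:ℝ)+1) ≤ 1/(m:ℝ) := one_div_le_one_div_of_le hmR (by linarith)
            linarith
          have h3 : δ q / 2^m ≤ δ q / 2^M :=
            div_le_div_of_nonneg_left (hδ0 q).le (by positivity)
              (pow_le_pow_right₀ (by norm_num) hMm)
          exact hball (Metric.mem_ball.2 (lt_of_lt_of_le (hu2 q m) (le_trans h3 hM.le)))
      · obtain ⟨ε0, hε0, hiso⟩ := hsiso ys h0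
        refine ⟨{p}, Metric.ball ys ε0, isOpen_discrete _, Metric.isOpen_ball, rfl,
          Metric.mem_ball_self hε0, ?_⟩
        rintro ⟨q, s⟩ ⟨hq, hs⟩
        have hq' : q = p := hq
        subst hq'
        show e (Sum.inr (q, s)) ∈ V
        rw [hiso s (Metric.mem_ball.1 hs)]
        exact hmem
  -- a helper for powers
  have hpow : ∀ c ρ0 : ℝ, 0 < c → 0 < ρ0 → ∃ M : ℕ, c / 2 ^ M < ρ0 := by
    intro c ρ0 hc hρ0
    obtain ⟨M, hM0⟩ := exists_pow_lt_of_lt_one (div_pos hρ0 hc) (by norm_num : (1/2 : ℝ) < 1)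
    have h2M : (0:ℝ) < (2:ℝ)^M := by positivity
    have heq : (1/2:ℝ)^M = 1/2^M := by rw [div_pow, one_pow]
    rw [heq, div_lt_div_iff₀ h2M hc] at hM0
    refine ⟨M, ?_⟩
    rw [div_lt_iff₀ h2M]
    linarith
  -- the closed map property
  have hclosedmap : IsClosedMap e := by
    intro F hF
    apply isClosed_of_closure_subset
    intro y hy
    have hyT : y ∈ T := by
      have hsub : closure (e '' F) ⊆ closure T :=
        closure_mono (by rintro t ⟨w, _, rfl⟩; exact he_mem w)
      have := hsub hy
      rwa [hTclosed.closure_eq] at this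
    obtain ⟨w, hw⟩ := hTsub y hyT
    by_cases hwF : w ∈ F
    · exact ⟨w, hwF, hw⟩
    exfalso
    subst hw
    suffices hsuff : ∃ ε, 0 < ε ∧ ∀ t ∈ e '' F, ¬ dist (e w) t < ε by
      obtain ⟨ε, hε, hdis⟩ := hsuff
      obtain ⟨t, ht1, ht2⟩ := Metric.mem_closure_iff.1 hy ε hε
      exact hdis t ht1 ht2
    rcases w with o | ⟨p, ys⟩
    · rcases o with _ | ⟨α, n⟩
      · -- w = ∞
        have hA : ∃ N : ℕ, ∀ α n : ℕ, N ≤ n →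
            (Sum.inl (Option.some (α, n)) : Lspace) ∈ (Fᶜ : Set Lspace) := by
          have hopen : IsOpen (Sum.inl ⁻¹' (Fᶜ : Set Lspace) : Set FanM) :=
            (hF.isOpen_compl).preimage continuous_inl
          exact hopen hwF
        obtain ⟨N, hN⟩ := hA
        have hKAcc : NoAcc (⋃ n, ⋃ _ : n < N, Sp n) := NoAcc.biUnion_lt hSpNoAcc N
        have hx₀K : x₀ ∉ (⋃ n, ⋃ _ : n < N, Sp n) := by
          intro hmem
          obtain ⟨n, hn⟩ := mem_iUnion.1 hmem
          obtain ⟨hnN, hmem2⟩ := mem_iUnion.1 hn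
          obtain ⟨α, hα⟩ := hmem2
          exact hgx α n hα
        obtain ⟨ε2, hε2, hball2⟩ := Metric.isOpen_iff.1 hKAcc.isClosed.isOpen_compl x₀ hx₀K
        obtain ⟨ε3, hε3, hball3⟩ := Metric.isOpen_iff.1 hUclopen.2 x₀ hx₀U
        rw [show e (Sum.inl Option.none) = x₀ from rfl]
        refine ⟨min ε2 ε3, lt_min hε2 hε3, ?_⟩
        rintro t ⟨w', hw'F, rfl⟩ hdist
        have hd2 : dist x₀ (e w') < ε2 := lt_of_lt_of_le hdist (min_le_left _ _)
        have hd3 : dist x₀ (e w') < ε3 := lt_of_lt_of_le hdist (min_le_right _ _)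
        rcases w' with o' | ⟨q, s⟩
        · rcases o' with _ | ⟨α, n⟩
          · exact hwF hw'F
          · rcases Nat.lt_or_ge n N with hlt | hge
            · refine hball2 (Metric.mem_ball.2 ?_)
                (mem_iUnion.2 ⟨n, mem_iUnion.2 ⟨hlt, ⟨α, rfl⟩⟩⟩)
              rw [dist_comm]
              exact hd2
            · exact (hN α n hge) hw'F
        · refine hU'side q s ?_
          refine hball3 (Metric.mem_ball.2 ?_)
          rw [dist_comm]
          exact hd3
      · -- w = fan point (α, n)
        rw [show e (Sum.inl (Option.some (α, n))) = g (α, n) from rfl]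
        have ha : 0 < dist (g (α, n)) x₀ := dist_pos.2 (hgx α n)
        obtain ⟨N, hN⟩ := exists_nat_one_div_lt (show (0:ℝ) < dist (g (α, n)) x₀ / 2 by linarith)
        have hKAcc : NoAcc (insert x₀ (⋃ n', ⋃ _ : n' < N, Sp n')) := by
          have h1 : NoAcc (⋃ n', ⋃ _ : n' < N, Sp n') := NoAcc.biUnion_lt hSpNoAcc N
          have h2 : NoAcc ({x₀} : Set X) := NoAcc.finite (finite_singleton _)
          rw [insert_eq]
          exact h2.union h1
        obtain ⟨ε2, hε2, h2iso⟩ := NoAcc.ball (hKAcc (g (α, n)))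
        obtain ⟨ε3, hε3, hball3⟩ := Metric.isOpen_iff.1 hUclopen.2 (g (α, n)) (hgU α n)
        refine ⟨min ε2 (min ε3 (dist (g (α, n)) x₀ / 2)),
          lt_min hε2 (lt_min hε3 (by linarith)), ?_⟩
        rintro t ⟨w', hw'F, rfl⟩ hdist
        have hd2 : dist (e w') (g (α, n)) < ε2 := by
          rw [dist_comm]; exact lt_of_lt_of_le hdist (min_le_left _ _)
        have hd3 : dist (e w') (g (α, n)) < ε3 := by
          rw [dist_comm]; exact lt_of_lt_of_le hdist (le_trans (min_le_right _ _) (min_le_left _ _))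
        have hd4 : dist (e w') (g (α, n)) < dist (g (α, n)) x₀ / 2 := by
          rw [dist_comm]; exact lt_of_lt_of_le hdist (le_trans (min_le_right _ _) (min_le_right _ _))
        rcases w' with o' | ⟨q, s⟩
        · rcases o' with _ | ⟨α', n'⟩
          · -- e w' = x₀
            have hcomm : dist (x₀ : X) (g (α, n)) = dist (g (α, n)) x₀ := dist_comm _ _
            have : dist (e (Sum.inl (Option.none : FanM))) (g (α, n)) =
                dist (g (α, n)) x₀ := hcomm
            rw [this] at hd4
            linarith
          · rcases Nat.lt_or_ge n' N with hlt | hge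
            · have hmem : g (α', n') ∈ insert x₀ (⋃ n', ⋃ _ : n' < N, Sp n') :=
                mem_insert_of_mem _ (mem_iUnion.2 ⟨n', mem_iUnion.2 ⟨hlt, ⟨α', rfl⟩⟩⟩)
              have heq : g (α', n') = g (α, n) := h2iso _ hmem hd2
              have hpair := hginj heq
              apply hwF
              have : (Sum.inl (Option.some (α', n')) : Lspace) =
                  Sum.inl (Option.some (α, n)) := by rw [hpair]; rfl
              refine this ▸ ?_
              exact hw'F
            · have h1 : dist (g (α', n')) x₀ ≤ 1 / ((N:ℝ)+1) :=
                le_trans (hgball α' n') (hmono N n' hge)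
              have h2 := dist_triangle (g (α, n)) (g (α', n')) x₀
              rw [dist_comm (g (α, n)) (g (α', n'))] at h2
              have hd4' : dist (g (α', n')) (g (α, n)) < dist (g (α, n)) x₀ / 2 := hd4
              linarith
        · exact hU'side q s (hball3 (Metric.mem_ball.2 hd3))
    · by_cases h0 : (ys : ℝ) = 0
      · -- w = c_p : the limit of the p-th convergent sequence
        rw [he_c p ys h0]
        have hjcont : Continuous (fun s : ↥sSet => (Sum.inr (p, s) : Lspace)) :=
          continuous_inr.comp (Continuous.prodMk_right p)
        have hFs : IsOpen ((fun s : ↥sSet => (Sum.inr (p, s) : Lspace)) ⁻¹' (Fᶜ : Set Lspace)) :=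
          hF.isOpen_compl.preimage hjcont
        have h0mem : (⟨0, Or.inl rfl⟩ : ↥sSet) ∈
            ((fun s : ↥sSet => (Sum.inr (p, s) : Lspace)) ⁻¹' (Fᶜ : Set Lspace)) := by
          show (Sum.inr (p, (⟨0, Or.inl rfl⟩ : ↥sSet)) : Lspace) ∉ F
          have hys : (⟨0, Or.inl rfl⟩ : ↥sSet) = ys := Subtype.ext h0.symm
          rw [hys]
          exact hwF
        obtain ⟨εs, hεs, hballs⟩ := Metric.isOpen_iff.1 hFs _ h0mem
        have hsmall : ∀ m : ℕ, 0 < m → 1/(m:ℝ) < εs → ∀ hy : (1/(m:ℝ)) ∈ sSet,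
            (Sum.inr (p, (⟨1/(m:ℝ), hy⟩ : ↥sSet)) : Lspace) ∉ F := by
          intro m hm hlt hy
          refine hballs (Metric.mem_ball.2 ?_)
          rw [Subtype.dist_eq]
          show dist ((1:ℝ)/(m:ℝ)) ((0:ℝ)) < εs
          rw [Real.dist_eq, sub_zero, abs_of_pos (by positivity)]
          exact hlt
        obtain ⟨M0, hM0⟩ := exists_nat_one_div_lt hεs
        have hfinAcc : NoAcc ((fun m => u p m) '' {m : ℕ | m ≤ M0 + 1}) :=
          NoAcc.finite ((Set.finite_le_nat _).image _)
        obtain ⟨ε2, hε2, h2iso⟩ := NoAcc.ball (hfinAcc (z p))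
        refine ⟨min ε2 (2 * δ p), lt_min hε2 (by have := hδ0 p; linarith), ?_⟩
        rintro t ⟨w', hw'F, rfl⟩ hdist
        have hd2 : dist (e w') (z p) < ε2 := by
          rw [dist_comm]; exact lt_of_lt_of_le hdist (min_le_left _ _)
        have hdδ : dist (e w') (z p) < 2 * δ p := by
          rw [dist_comm]; exact lt_of_lt_of_le hdist (min_le_right _ _)
        rcases w' with o' | ⟨q, s⟩
        · have : e (Sum.inl o') ∈ Uᶜ :=
            hrU p (Metric.mem_ball.2 (lt_of_lt_of_le hdδ (h2δr p)))
          exact this (hUside o')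
        · have hq : q = p :=
            (hsep p q (e (Sum.inr (q, s))) (e (Sum.inr (q, s))) hdδ (hsb q s) rfl).symm
          subst hq
          by_cases hs0 : (s : ℝ) = 0
          · apply hwF
            have hys : s = ys := Subtype.ext (by rw [hs0, h0])
            rw [← hys]
            exact hw'F
          · obtain ⟨m, hm, hval, hfl⟩ := hsval s hs0
            rw [he_s q s hs0, hfl] at hd2
            rcases Nat.lt_or_ge (M0 + 1) m with hbig | hsmall2
            · have hmR : (0:ℝ) < m := by exact_mod_cast hm
              have hlt : 1/(m:ℝ) < εs := by
                refine lt_of_le_of_lt ?_ hM0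
                refine one_div_le_one_div_of_le (by positivity) ?_
                have : ((M0:ℝ)+1) + 1 ≤ (m:ℝ) := by exact_mod_cast hbig
                linarith
              have hy2 : (1/(m:ℝ)) ∈ sSet := Or.inr ⟨m, hm, rfl⟩
              have hseq : s = (⟨1/(m:ℝ), hy2⟩ : ↥sSet) := Subtype.ext hval
              apply hsmall m hm hlt hy2
              rw [← hseq]
              exact hw'F
            · have : u q m = z q := h2iso _ ⟨m, hsmall2, rfl⟩ hd2
              exact hu1 q m this
      · -- w = a point of the p-th convergent sequence
        obtain ⟨m₀, hm₀, hval₀, hfl₀⟩ := hsval ys h0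
        rw [he_s p ys h0, hfl₀]
        have hd₀ : 0 < dist (u p m₀) (z p) := hu0 p m₀
        obtain ⟨M, hM⟩ := hpow (δ p) (dist (u p m₀) (z p) / 2) (hδ0 p) (by linarith)
        have hfinAcc : NoAcc (((fun m => u p m) '' {m : ℕ | m ≤ M}) ∪ {z p}) :=
          ((NoAcc.finite ((Set.finite_le_nat _).image _))).union (NoAcc.finite (finite_singleton _))
        obtain ⟨ε2, hε2, h2iso⟩ := NoAcc.ball (hfinAcc (u p m₀))
        refine ⟨min ε2 (min (dist (u p m₀) (z p) / 2) (δ p)),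
          lt_min hε2 (lt_min (by linarith) (hδ0 p)), ?_⟩
        rintro t ⟨w', hw'F, rfl⟩ hdist
        have hd2 : dist (e w') (u p m₀) < ε2 := by
          rw [dist_comm]; exact lt_of_lt_of_le hdist (min_le_left _ _)
        have hdhalf : dist (e w') (u p m₀) < dist (u p m₀) (z p) / 2 := by
          rw [dist_comm]; exact lt_of_lt_of_le hdist (le_trans (min_le_right _ _) (min_le_left _ _))
        have hdδ' : dist (e w') (u p m₀) < δ p := by
          rw [dist_comm]; exact lt_of_lt_of_le hdist (le_trans (min_le_right _ _) (min_le_right _ _))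
        have hdU : dist (e w') (z p) < 2 * δ p := by
          have h2 := dist_triangle (e w') (u p m₀) (z p)
          have := huδ p m₀
          linarith
        rcases w' with o' | ⟨q, s⟩
        · have : e (Sum.inl o') ∈ Uᶜ :=
            hrU p (Metric.mem_ball.2 (lt_of_lt_of_le hdU (h2δr p)))
          exact this (hUside o')
        · have hq : q = p :=
            (hsep p q (e (Sum.inr (q, s))) (e (Sum.inr (q, s))) hdU (hsb q s) rfl).symm
          subst hq
          by_cases hs0 : (s : ℝ) = 0
          · rw [he_c q s hs0] at hd2
            have : z q = u q m₀ := h2iso _ (Or.inr rfl) hd2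
            exact hu1 q m₀ this.symm
          · obtain ⟨m, hm, hval, hfl⟩ := hsval s hs0
            rw [he_s q s hs0, hfl] at hd2 hdhalf
            rcases Nat.lt_or_ge M m with hbig | hsmall2
            · -- far tail : distance from y at least d₀/2
              have h3 : δ q / 2^m ≤ δ q / 2^M :=
                div_le_div_of_nonneg_left (hδ0 q).le (by positivity)
                  (pow_le_pow_right₀ (by norm_num) hbig.le)
              have h4 : dist (u q m) (z q) < dist (u q m₀) (z q) / 2 :=
                lt_of_lt_of_le (hu2 q m) (le_trans h3 hM.le)
              have h5 := dist_triangle (u q m₀) (u q m) (z q)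
              rw [dist_comm (u q m₀) (u q m)] at h5
              linarith
            · have : u q m = u q m₀ := h2iso _ (Or.inl ⟨m, hsmall2, rfl⟩) hd2
              have hmm : m = m₀ := huinj q this
              apply hwF
              have hseq : s = ys := Subtype.ext (by rw [hval, hval₀, hmm])
              rw [← hseq]
              exact hw'F
  exact ⟨e, Topology.IsClosedEmbedding.of_continuous_injective_isClosedMap hcont heinj hclosedmap⟩
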